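/- If θ₁, θ₂ ∈ Θ satisfy ‖θ₁ − θ₂‖₂ ≤ ρ t_{θ₁} for some ρ ≥ 0, then (1 − √(ρ² + 4ρ))₊ · t_{θ₁} ≤ t_{θ₂} ≤ (1 + √(ρ² + 4ρ)) · t_{θ₁}. -/

import Mathlib

open MeasureTheory ProbabilityTheory Real Set
open scoped ENNReal NNReal

noncomputable def stdGaussian (n : ℕ) : Measure (EuclideanSpace ℝ (Fin n)) :=
  Measure.map (⇑(EuclideanSpace.equiv (Fin n) ℝ).symm) (Measure.pi fun _ => gaussianReal 0 1)

noncomputable def mfun (n : ℕ) (Θ : Set (EuclideanSpace ℝ (Fin n)))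
    (f : EuclideanSpace ℝ (Fin n) → ℝ) (θ : EuclideanSpace ℝ (Fin n)) (t : ℝ) : ℝ :=
  ∫ z, sSup ((fun α => (inner ℝ z (α - θ) : ℝ) - f α) '' {α ∈ Θ | ‖α - θ‖ ≤ t}) ∂(stdGaussian n)

lemma odd_integral_zero {h : ℝ → ℝ} (hodd : ∀ x, h (-x) = - h x) :
    ∫ x, h x = 0 := by
  have A : MeasurableEmbedding fun x : ℝ => -x :=
    (Homeomorph.neg ℝ).isClosedEmbedding.measurableEmbedding
  have h1 : ∫ x, h x = ∫ x, h (-x) := by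
    conv_lhs => rw [← Measure.map_neg_eq_self (volume : Measure ℝ)]
    rw [A.integral_map]

  have h2 : ∫ x, h (-x) = - ∫ x, h x := by
    simp_rw [hodd]; exact integral_neg h
  linarith [h1, h2]

lemma pdf_mul_integrable : Integrable (fun x : ℝ => gaussianPDFReal 0 1 x * x) := by
  have h : (fun x : ℝ => gaussianPDFReal 0 1 x * x)
      = fun x => (√(2 * π))⁻¹ * (x * rexp (-(1/2) * x ^ 2)) := by
    ext x
    simp only [gaussianPDFReal]
    push_cast
    ring_nf
  rw [h]
  exact (integrable_mul_exp_neg_mul_sq (by norm_num : (0:ℝ) < 1/2)).const_mul _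

lemma gauss_eq : gaussianReal 0 1
    = volume.withDensity (fun x => ((gaussianPDFReal 0 1 x).toNNReal : ℝ≥0∞)) := by
  rw [gaussianReal_of_var_ne_zero 0 one_ne_zero]
  rfl

lemma integrable_id_gauss : Integrable (fun x : ℝ => x) (gaussianReal 0 1) := by
  rw [gauss_eq, integrable_withDensity_iff_integrable_coe_smul
    (measurable_gaussianPDFReal 0 1).real_toNNReal]
  have : (fun x : ℝ => ((gaussianPDFReal 0 1 x).toNNReal : ℝ) • x)
      = fun x => gaussianPDFReal 0 1 x * x := by
    ext x
    rw [Real.coe_toNNReal _ (gaussianPDFReal_nonneg 0 1 x)]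
    simp [smul_eq_mul]
  rw [this]
  exact pdf_mul_integrable

lemma integral_id_gauss : ∫ x, x ∂(gaussianReal 0 1) = 0 := by
  rw [gauss_eq, integral_withDensity_eq_integral_smul
    (measurable_gaussianPDFReal 0 1).real_toNNReal]
  have : (fun x : ℝ => ((gaussianPDFReal 0 1 x).toNNReal : ℝ≥0) • x)
      = fun x => gaussianPDFReal 0 1 x * x := by
    ext x
    rw [NNReal.smul_def, Real.coe_toNNReal _ (gaussianPDFReal_nonneg 0 1 x)]
    simp [smul_eq_mul]
  rw [this]
  apply odd_integral_zero
  intro x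
  have : gaussianPDFReal 0 1 (-x) = gaussianPDFReal 0 1 x := by
    simp [gaussianPDFReal]
  rw [this]; ring

lemma map_eval_pi_gauss {n : ℕ} (i : Fin n) :
    Measure.map (Function.eval i) (Measure.pi fun _ : Fin n => gaussianReal 0 1)
      = gaussianReal 0 1 := by
  ext s hs
  rw [Measure.map_apply (measurable_pi_apply i) hs, ← Set.univ_pi_update_univ, Measure.pi_pi]
  rw [Finset.prod_eq_single i (fun j _ hj => by simp [Function.update_of_ne hj])
    (by simp)]
  simp [Function.update_self]

lemma integrable_eval_pi {n : ℕ} (i : Fin n) :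
    Integrable (fun z : Fin n → ℝ => z i) (Measure.pi fun _ : Fin n => gaussianReal 0 1) := by
  have hmap := map_eval_pi_gauss (n := n) i
  have h0 : Integrable (fun x : ℝ => x)
      (Measure.map (Function.eval i) (Measure.pi fun _ : Fin n => gaussianReal 0 1)) := by
    rw [hmap]; exact integrable_id_gauss
  have h1 : AEStronglyMeasurable (fun x : ℝ => x)
      (Measure.map (Function.eval i) (Measure.pi fun _ : Fin n => gaussianReal 0 1)) := by
    rw [hmap]; exact aestronglyMeasurable_id
  have h2 : AEMeasurable (Function.eval i) (Measure.pi fun _ : Fin n => gaussianReal 0 1) :=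
    (measurable_pi_apply i).aemeasurable
  exact (integrable_map_measure h1 h2).mp h0

lemma integral_eval_pi {n : ℕ} (i : Fin n) :
    ∫ z, z i ∂(Measure.pi fun _ : Fin n => gaussianReal 0 1) = 0 := by
  have hmap := map_eval_pi_gauss (n := n) i
  have h1 : AEStronglyMeasurable (fun x : ℝ => x)
      (Measure.map (Function.eval i) (Measure.pi fun _ : Fin n => gaussianReal 0 1)) := by
    rw [hmap]; exact aestronglyMeasurable_id
  have h2 : AEMeasurable (Function.eval i) (Measure.pi fun _ : Fin n => gaussianReal 0 1) :=
    (measurable_pi_apply i).aemeasurable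
  have h := integral_map (f := fun x : ℝ => x) h2 h1
  rw [hmap, integral_id_gauss] at h
  exact h.symm

lemma integrable_sum_pi {n : ℕ} (v : EuclideanSpace ℝ (Fin n)) :
    Integrable (fun z : Fin n → ℝ => ∑ i, z i * v i)
      (Measure.pi fun _ : Fin n => gaussianReal 0 1) :=
  integrable_finset_sum _ (fun i _ => (integrable_eval_pi i).mul_const (v i))

lemma inner_comp {n : ℕ} (v : EuclideanSpace ℝ (Fin n)) (z : Fin n → ℝ) :
    (inner ℝ ((EuclideanSpace.equiv (Fin n) ℝ).symm z) v : ℝ) = ∑ i, z i * v i := by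
  rw [PiLp.inner_apply]
  simp [RCLike.inner_apply, conj_trivial]
  exact Finset.sum_congr rfl (fun i _ => mul_comm _ _)

lemma integrable_inner_std {n : ℕ} (v : EuclideanSpace ℝ (Fin n)) :
    Integrable (fun z => (inner ℝ z v : ℝ)) (stdGaussian n) := by
  rw [_root_.stdGaussian]
  have h1 : AEStronglyMeasurable (fun z : EuclideanSpace ℝ (Fin n) => (inner ℝ z v : ℝ))
      (Measure.map (⇑(EuclideanSpace.equiv (Fin n) ℝ).symm)
        (Measure.pi fun _ : Fin n => gaussianReal 0 1)) :=
    (continuous_id.inner continuous_const).aestronglyMeasurable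
  have h2 : AEMeasurable (⇑(EuclideanSpace.equiv (Fin n) ℝ).symm)
      (Measure.pi fun _ : Fin n => gaussianReal 0 1) :=
    (EuclideanSpace.equiv (Fin n) ℝ).symm.continuous.measurable.aemeasurable
  rw [integrable_map_measure h1 h2]
  have : ((fun z : EuclideanSpace ℝ (Fin n) => (inner ℝ z v : ℝ)) ∘
      ⇑(EuclideanSpace.equiv (Fin n) ℝ).symm) = fun z : Fin n → ℝ => ∑ i, z i * v i := by
    ext z; exact inner_comp v z
  rw [this]
  exact integrable_sum_pi v

lemma integral_inner_std {n : ℕ} (v : EuclideanSpace ℝ (Fin n)) :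
    ∫ z, (inner ℝ z v : ℝ) ∂(stdGaussian n) = 0 := by
  rw [_root_.stdGaussian]
  have h1 : AEStronglyMeasurable (fun z : EuclideanSpace ℝ (Fin n) => (inner ℝ z v : ℝ))
      (Measure.map (⇑(EuclideanSpace.equiv (Fin n) ℝ).symm)
        (Measure.pi fun _ : Fin n => gaussianReal 0 1)) :=
    (continuous_id.inner continuous_const).aestronglyMeasurable
  have h2 : AEMeasurable (⇑(EuclideanSpace.equiv (Fin n) ℝ).symm)
      (Measure.pi fun _ : Fin n => gaussianReal 0 1) :=
    (EuclideanSpace.equiv (Fin n) ℝ).symm.continuous.measurable.aemeasurable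
  rw [integral_map h2 h1]
  have heq : ∀ z : Fin n → ℝ,
      (inner ℝ ((EuclideanSpace.equiv (Fin n) ℝ).symm z) v : ℝ) = ∑ i, z i * v i :=
    inner_comp v
  rw [integral_congr_ae (Filter.Eventually.of_forall heq)]
  rw [integral_finset_sum _ (fun i _ => (integrable_eval_pi i).mul_const (v i))]
  simp [integral_mul_const, integral_eval_pi]

section MAux

variable {n : ℕ} {Θ : Set (EuclideanSpace ℝ (Fin n))} {f : EuclideanSpace ℝ (Fin n) → ℝ}

lemma S_nonempty {θ : EuclideanSpace ℝ (Fin n)} (hθ : θ ∈ Θ) {t : ℝ} (ht : 0 ≤ t)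
    (z : EuclideanSpace ℝ (Fin n)) :
    ((fun α => (inner ℝ z (α - θ) : ℝ) - f α) '' {α ∈ Θ | ‖α - θ‖ ≤ t}).Nonempty :=
  ⟨_, ⟨θ, ⟨hθ, by simpa using ht⟩, rfl⟩⟩

lemma S_bddAbove (hbdd : BddBelow (f '' Θ)) (θ : EuclideanSpace ℝ (Fin n)) (t : ℝ)
    (z : EuclideanSpace ℝ (Fin n)) :
    BddAbove ((fun α => (inner ℝ z (α - θ) : ℝ) - f α) '' {α ∈ Θ | ‖α - θ‖ ≤ t}) := by
  obtain ⟨B, hB⟩ := hbdd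
  refine ⟨‖z‖ * t - B, ?_⟩
  rintro x ⟨α, ⟨hαΘ, hαt⟩, rfl⟩
  have h1 : (inner ℝ z (α - θ) : ℝ) ≤ ‖z‖ * t := by
    refine le_trans (real_inner_le_norm _ _) ?_
    exact mul_le_mul_of_nonneg_left hαt (norm_nonneg z)
  have h2 : B ≤ f α := hB ⟨α, hαΘ, rfl⟩
  simp only
  linarith

lemma mul_csSup_le {s : Set ℝ} (hne : s.Nonempty) {p C : ℝ} (hp : 0 < p)
    (h : ∀ x ∈ s, p * x ≤ C) : p * sSup s ≤ C := by
  have h1 : sSup s ≤ C / p :=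
    csSup_le hne (fun x hx => (le_div_iff₀ hp).mpr (by rw [mul_comm]; exact h x hx))
  have h2 : p * sSup s ≤ p * (C / p) := mul_le_mul_of_nonneg_left h1 hp.le
  calc p * sSup s ≤ p * (C / p) := h2
  _ = C := by field_simp

lemma g_shift (hbdd : BddBelow (f '' Θ)) {θ θ' : EuclideanSpace ℝ (Fin n)}
    (hθ : θ ∈ Θ) {t : ℝ} (ht : 0 ≤ t) (z : EuclideanSpace ℝ (Fin n)) :
    sSup ((fun α => (inner ℝ z (α - θ) : ℝ) - f α) '' {α ∈ Θ | ‖α - θ‖ ≤ t})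
      ≤ sSup ((fun α => (inner ℝ z (α - θ') : ℝ) - f α) '' {α ∈ Θ | ‖α - θ'‖ ≤ t + ‖θ - θ'‖})
        - (inner ℝ z (θ - θ') : ℝ) := by
  refine csSup_le (S_nonempty hθ ht z) ?_
  rintro x ⟨α, ⟨hαΘ, hαt⟩, rfl⟩
  have hsplit : α - θ' = (α - θ) + (θ - θ') := by abel
  have hnorm : ‖α - θ'‖ ≤ t + ‖θ - θ'‖ := by
    rw [hsplit]
    exact le_trans (norm_add_le _ _) (add_le_add_left hαt _)
  have hinner : (inner ℝ z (α - θ') : ℝ) = (inner ℝ z (α - θ) : ℝ) + (inner ℝ z (θ - θ') : ℝ) := by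
    rw [hsplit, inner_add_right]
  have hmem : (inner ℝ z (α - θ') : ℝ) - f α ∈
      ((fun α => (inner ℝ z (α - θ') : ℝ) - f α) '' {α ∈ Θ | ‖α - θ'‖ ≤ t + ‖θ - θ'‖}) :=
    ⟨α, ⟨hαΘ, hnorm⟩, rfl⟩
  have hle := le_csSup (S_bddAbove hbdd θ' (t + ‖θ - θ'‖) z) hmem
  simp only
  linarith

lemma g_concave (hconv : Convex ℝ Θ) (hf : ConvexOn ℝ Θ f) (hbdd : BddBelow (f '' Θ))
    {θ : EuclideanSpace ℝ (Fin n)} (hθ : θ ∈ Θ) {a b p q : ℝ}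
    (ha : 0 ≤ a) (hb : 0 ≤ b) (hp : 0 < p) (hq : 0 < q) (hpq : p + q = 1)
    (z : EuclideanSpace ℝ (Fin n)) :
    p * sSup ((fun α => (inner ℝ z (α - θ) : ℝ) - f α) '' {α ∈ Θ | ‖α - θ‖ ≤ a})
      + q * sSup ((fun α => (inner ℝ z (α - θ) : ℝ) - f α) '' {α ∈ Θ | ‖α - θ‖ ≤ b})
      ≤ sSup ((fun α => (inner ℝ z (α - θ) : ℝ) - f α) '' {α ∈ Θ | ‖α - θ‖ ≤ p * a + q * b}) := by
  set M := sSup ((fun α => (inner ℝ z (α - θ) : ℝ) - f α) '' {α ∈ Θ | ‖α - θ‖ ≤ p * a + q * b})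
    with hM
  have hkey : ∀ x ∈ ((fun α => (inner ℝ z (α - θ) : ℝ) - f α) '' {α ∈ Θ | ‖α - θ‖ ≤ a}),
      ∀ y ∈ ((fun α => (inner ℝ z (α - θ) : ℝ) - f α) '' {α ∈ Θ | ‖α - θ‖ ≤ b}),
      p * x + q * y ≤ M := by
    rintro x ⟨α, ⟨hαΘ, hαa⟩, rfl⟩ y ⟨β, ⟨hβΘ, hβb⟩, rfl⟩
    have hmem : p • α + q • β ∈ Θ := hconv hαΘ hβΘ hp.le hq.le hpq
    have hdiff : p • α + q • β - θ = p • (α - θ) + q • (β - θ) := by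
      have h1 : p • (α - θ) + q • (β - θ) = p • α + q • β - (p • θ + q • θ) := by
        rw [smul_sub, smul_sub]; abel
      rw [h1, ← add_smul, hpq, one_smul]
    have hnorm : ‖p • α + q • β - θ‖ ≤ p * a + q * b := by
      rw [hdiff]
      calc ‖p • (α - θ) + q • (β - θ)‖ ≤ ‖p • (α - θ)‖ + ‖q • (β - θ)‖ := norm_add_le _ _
      _ = p * ‖α - θ‖ + q * ‖β - θ‖ := by
          rw [norm_smul, norm_smul, Real.norm_of_nonneg hp.le, Real.norm_of_nonneg hq.le]
      _ ≤ p * a + q * b := by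
          exact add_le_add (mul_le_mul_of_nonneg_left hαa hp.le)
            (mul_le_mul_of_nonneg_left hβb hq.le)
    have hfle : f (p • α + q • β) ≤ p * f α + q * f β := hf.2 hαΘ hβΘ hp.le hq.le hpq
    have hinner : (inner ℝ z (p • α + q • β - θ) : ℝ)
        = p * (inner ℝ z (α - θ) : ℝ) + q * (inner ℝ z (β - θ) : ℝ) := by
      rw [hdiff, inner_add_right, real_inner_smul_right, real_inner_smul_right]
    have hmemS : (inner ℝ z (p • α + q • β - θ) : ℝ) - f (p • α + q • β) ∈
        ((fun α => (inner ℝ z (α - θ) : ℝ) - f α) '' {α ∈ Θ | ‖α - θ‖ ≤ p * a + q * b}) :=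
      ⟨p • α + q • β, ⟨hmem, hnorm⟩, rfl⟩
    have hle := le_csSup (S_bddAbove hbdd θ (p * a + q * b) z) hmemS
    simp only
    linarith
  have h2 : p * sSup ((fun α => (inner ℝ z (α - θ) : ℝ) - f α) '' {α ∈ Θ | ‖α - θ‖ ≤ a})
      ≤ M - q * sSup ((fun α => (inner ℝ z (α - θ) : ℝ) - f α) '' {α ∈ Θ | ‖α - θ‖ ≤ b}) := by
    refine mul_csSup_le (S_nonempty hθ ha z) hp ?_
    intro x hx
    have h3 : q * sSup ((fun α => (inner ℝ z (α - θ) : ℝ) - f α) '' {α ∈ Θ | ‖α - θ‖ ≤ b})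
        ≤ M - p * x := by
      refine mul_csSup_le (S_nonempty hθ hb z) hq ?_
      intro y hy
      have := hkey x hx y hy
      linarith
    linarith
  linarith

end MAux

section MInt

variable {n : ℕ} {Θ : Set (EuclideanSpace ℝ (Fin n))} {f : EuclideanSpace ℝ (Fin n) → ℝ}

variable (hbdd : BddBelow (f '' Θ))
  (hInt : ∀ θ ∈ Θ, ∀ t : ℝ, Integrable
      (fun z => sSup ((fun α => (inner ℝ z (α - θ) : ℝ) - f α) '' {α ∈ Θ | ‖α - θ‖ ≤ t}))
      (stdGaussian n))

include hbdd hInt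

lemma mfun_shift {θ θ' : EuclideanSpace ℝ (Fin n)} (hθ : θ ∈ Θ) (hθ' : θ' ∈ Θ)
    {t : ℝ} (ht : 0 ≤ t) :
    mfun n Θ f θ t ≤ mfun n Θ f θ' (t + ‖θ - θ'‖) := by
  have hint1 := hInt θ hθ t
  have hint2 : Integrable (fun z => sSup ((fun α => (inner ℝ z (α - θ') : ℝ) - f α) ''
      {α ∈ Θ | ‖α - θ'‖ ≤ t + ‖θ - θ'‖}) - (inner ℝ z (θ - θ') : ℝ)) (stdGaussian n) :=
    (hInt θ' hθ' (t + ‖θ - θ'‖)).sub (integrable_inner_std (θ - θ'))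
  have hmono := integral_mono (μ := stdGaussian n) hint1 hint2
    (fun z => g_shift hbdd hθ ht z)
  rw [integral_sub (hInt θ' hθ' (t + ‖θ - θ'‖)) (integrable_inner_std (θ - θ')),
    integral_inner_std] at hmono
  simpa [mfun] using hmono

lemma mfun_concave (hconv : Convex ℝ Θ) (hf : ConvexOn ℝ Θ f)
    {θ : EuclideanSpace ℝ (Fin n)} (hθ : θ ∈ Θ) {a b p q : ℝ}
    (ha : 0 ≤ a) (hb : 0 ≤ b) (hp : 0 < p) (hq : 0 < q) (hpq : p + q = 1) :
    p * mfun n Θ f θ a + q * mfun n Θ f θ b ≤ mfun n Θ f θ (p * a + q * b) := by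
  have hint1 : Integrable (fun z =>
      p * sSup ((fun α => (inner ℝ z (α - θ) : ℝ) - f α) '' {α ∈ Θ | ‖α - θ‖ ≤ a})
      + q * sSup ((fun α => (inner ℝ z (α - θ) : ℝ) - f α) '' {α ∈ Θ | ‖α - θ‖ ≤ b}))
      (stdGaussian n) :=
    ((hInt θ hθ a).const_mul p).add ((hInt θ hθ b).const_mul q)
  have hint2 := hInt θ hθ (p * a + q * b)
  have hmono := integral_mono (μ := stdGaussian n) hint1 hint2
    (fun z => g_concave hconv hf hbdd hθ ha hb hp hq hpq z)
  rw [integral_add ((hInt θ hθ a).const_mul p) ((hInt θ hθ b).const_mul q),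
    integral_const_mul, integral_const_mul] at hmono
  simpa [mfun] using hmono

lemma mfun_slope (hconv : Convex ℝ Θ) (hf : ConvexOn ℝ Θ f)
    {θ : EuclideanSpace ℝ (Fin n)} (hθ : θ ∈ Θ) {t : ℝ} (ht : 0 ≤ t)
    (hmax : IsMaxOn (fun s => mfun n Θ f θ s - s ^ 2 / 2) (Set.Ici 0) t)
    {u : ℝ} (hu : t ≤ u) :
    mfun n Θ f θ u - mfun n Θ f θ t ≤ t * (u - t) := by
  rcases eq_or_lt_of_le hu with rfl | hu'
  · simp
  set Δ := u - t with hΔ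
  have hΔpos : 0 < Δ := by simp [hΔ]; linarith
  refine le_of_forall_pos_le_add ?_
  intro ε hε
  set lam := min (1/2 : ℝ) (2 * ε / Δ ^ 2) with hlam
  have hlampos : 0 < lam := lt_min (by norm_num) (by positivity)
  have hlamlt : lam < 1 := lt_of_le_of_lt (min_le_left _ _) (by norm_num)
  have hq : 0 < 1 - lam := by linarith
  have hpq : lam + (1 - lam) = 1 := by ring
  have hconc := mfun_concave hbdd hInt hconv hf hθ (le_trans ht hu) ht hlampos hq hpq
  have hpt : lam * u + (1 - lam) * t = t + lam * Δ := by rw [hΔ]; ring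
  rw [hpt] at hconc
  have hmem : t + lam * Δ ∈ Set.Ici (0 : ℝ) := by
    simp only [Set.mem_Ici]
    nlinarith
  have hmax' := hmax hmem
  simp only [Set.mem_setOf_eq] at hmax'
  -- hmax' : mfun ... (t + lam*Δ) - (t + lam*Δ)^2/2 ≤ mfun ... t - t^2/2
  have hstep : lam * (mfun n Θ f θ u - mfun n Θ f θ t) ≤ lam * (t * Δ) + lam ^ 2 * Δ ^ 2 / 2 := by
    nlinarith [hconc, hmax']
  have hdiv : mfun n Θ f θ u - mfun n Θ f θ t ≤ t * Δ + lam * Δ ^ 2 / 2 := by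
    have := (mul_le_mul_iff_of_pos_left hlampos).mp (by nlinarith [hstep] : lam * (mfun n Θ f θ u - mfun n Θ f θ t) ≤ lam * (t * Δ + lam * Δ ^ 2 / 2))
    exact this
  have hlamε : lam * Δ ^ 2 / 2 ≤ ε := by
    have h1 : lam ≤ 2 * ε / Δ ^ 2 := min_le_right _ _
    have h2 : lam * Δ ^ 2 ≤ 2 * ε := by
      rw [← le_div_iff₀ (by positivity : (0:ℝ) < Δ ^ 2)]
      exact h1
    nlinarith [h2]
  nlinarith [hdiv, hlamε]

lemma key_ineq (hconv : Convex ℝ Θ) (hf : ConvexOn ℝ Θ f)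
    {θ θ' : EuclideanSpace ℝ (Fin n)} (hθ : θ ∈ Θ) (hθ' : θ' ∈ Θ)
    {t t' : ℝ} (ht : 0 ≤ t) (ht' : 0 ≤ t')
    (hmax : IsMaxOn (fun s => mfun n Θ f θ s - s ^ 2 / 2) (Set.Ici 0) t)
    (hmax' : IsMaxOn (fun s => mfun n Θ f θ' s - s ^ 2 / 2) (Set.Ici 0) t')
    (h : t + ‖θ - θ'‖ ≤ t') :
    (t' - t) ^ 2 ≤ ‖θ - θ'‖ ^ 2 + 4 * t * ‖θ - θ'‖ := by
  set d := ‖θ - θ'‖ with hd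
  have hd0 : 0 ≤ d := norm_nonneg _
  have h1 : mfun n Θ f θ t ≤ mfun n Θ f θ' (t + d) := mfun_shift hbdd hInt hθ hθ' ht
  have h2 : mfun n Θ f θ' t' ≤ mfun n Θ f θ (t' + d) := by
    have := mfun_shift hbdd hInt hθ' hθ ht'
    rwa [norm_sub_rev] at this
  have h3 := hmax' (by simp only [Set.mem_Ici]; linarith : t + d ∈ Set.Ici (0:ℝ))
  simp only [Set.mem_setOf_eq] at h3
  -- h3 : mfun θ' (t+d) - (t+d)^2/2 ≤ mfun θ' t' - t'^2/2
  have h4 : mfun n Θ f θ (t' + d) - mfun n Θ f θ t ≥ (t' ^ 2 - (t + d) ^ 2) / 2 := by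
    linarith
  have h5 := mfun_slope hbdd hInt hconv hf hθ ht hmax (by linarith : t ≤ t' + d)
  nlinarith [h4, h5]

end MInt

theorem stmt10 (n : ℕ) (Θ : Set (EuclideanSpace ℝ (Fin n)))
    (f : EuclideanSpace ℝ (Fin n) → ℝ)
    (hne : Θ.Nonempty) (hcl : IsClosed Θ) (hconv : Convex ℝ Θ) (hf : ConvexOn ℝ Θ f)
    (hbdd : BddBelow (f '' Θ))
    (hInt : ∀ θ ∈ Θ, ∀ t : ℝ, Integrable
      (fun z => sSup ((fun α => (inner ℝ z (α - θ) : ℝ) - f α) '' {α ∈ Θ | ‖α - θ‖ ≤ t}))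
      (stdGaussian n))
    (θ₁ θ₂ : EuclideanSpace ℝ (Fin n)) (hθ₁ : θ₁ ∈ Θ) (hθ₂ : θ₂ ∈ Θ)
    (t₁ t₂ : ℝ) (ht₁ : t₁ ∈ Set.Ici (0 : ℝ))
    (hmax₁ : IsMaxOn (fun t => mfun n Θ f θ₁ t - t ^ 2 / 2) (Set.Ici 0) t₁)
    (ht₂ : t₂ ∈ Set.Ici (0 : ℝ))
    (hmax₂ : IsMaxOn (fun t => mfun n Θ f θ₂ t - t ^ 2 / 2) (Set.Ici 0) t₂)
    (ρ : ℝ) (hρ : 0 ≤ ρ) (hd : ‖θ₁ - θ₂‖ ≤ ρ * t₁) :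
    max (1 - Real.sqrt (ρ ^ 2 + 4 * ρ)) 0 * t₁ ≤ t₂ ∧
      t₂ ≤ (1 + Real.sqrt (ρ ^ 2 + 4 * ρ)) * t₁ := by
  have ht₁' : (0:ℝ) ≤ t₁ := ht₁
  have ht₂' : (0:ℝ) ≤ t₂ := ht₂
  set s := Real.sqrt (ρ ^ 2 + 4 * ρ) with hs
  have hsnn : 0 ≤ s := Real.sqrt_nonneg _
  have hρs : ρ ≤ s := by
    have h := Real.sqrt_le_sqrt (by nlinarith : ρ ^ 2 ≤ ρ ^ 2 + 4 * ρ)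
    rwa [Real.sqrt_sq hρ] at h
  set d := ‖θ₁ - θ₂‖ with hdd
  have hd0 : 0 ≤ d := norm_nonneg _
  have hquad : ∀ x : ℝ, 0 ≤ x → x ^ 2 ≤ (ρ ^ 2 + 4 * ρ) * t₁ ^ 2 → x ≤ s * t₁ := by
    intro x hx hx2
    have h1 : x ≤ Real.sqrt ((ρ ^ 2 + 4 * ρ) * t₁ ^ 2) := by
      rw [show x = Real.sqrt (x ^ 2) from (Real.sqrt_sq hx).symm]
      exact Real.sqrt_le_sqrt hx2
    rwa [Real.sqrt_mul (by nlinarith : (0:ℝ) ≤ ρ ^ 2 + 4 * ρ), Real.sqrt_sq ht₁'] at h1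
  constructor
  · -- lower bound
    rcases le_or_gt (1 - s) 0 with hcase | hcase
    · rw [max_eq_right hcase, zero_mul]
      exact ht₂'
    · rw [max_eq_left hcase.le]
      -- need (1 - s) * t₁ ≤ t₂, i.e. t₁ - t₂ ≤ s * t₁
      have hgoal : t₁ - t₂ ≤ s * t₁ := by
        rcases le_or_gt t₁ (t₂ + d) with hc | hc
        · have : t₁ - t₂ ≤ d := by linarith
          have : t₁ - t₂ ≤ ρ * t₁ := le_trans this hd
          have hρt : ρ * t₁ ≤ s * t₁ := mul_le_mul_of_nonneg_right hρs ht₁'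
          linarith
        · have hkey := key_ineq hbdd hInt hconv hf hθ₂ hθ₁ ht₂' ht₁' hmax₂ hmax₁
            (by rw [norm_sub_rev]; linarith : t₂ + ‖θ₂ - θ₁‖ ≤ t₁)
          rw [norm_sub_rev] at hkey
          -- hkey : (t₁ - t₂)^2 ≤ d^2 + 4*t₂*d
          have ht21 : t₂ ≤ t₁ := by linarith
          have h2 : (t₁ - t₂) ^ 2 ≤ (ρ ^ 2 + 4 * ρ) * t₁ ^ 2 := by nlinarith [hkey, hd, hd0, ht₁', ht21]
          exact hquad _ (by linarith) h2
      nlinarith [hgoal]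
  · -- upper bound
    rcases le_or_gt t₂ (t₁ + d) with hc | hc
    · have hρt : ρ * t₁ ≤ s * t₁ := mul_le_mul_of_nonneg_right hρs ht₁'
      nlinarith [hc, hd]
    · have hkey := key_ineq hbdd hInt hconv hf hθ₁ hθ₂ ht₁' ht₂' hmax₁ hmax₂
        (by linarith : t₁ + ‖θ₁ - θ₂‖ ≤ t₂)
      -- hkey : (t₂ - t₁)^2 ≤ d^2 + 4*t₁*d
      have h2 : (t₂ - t₁) ^ 2 ≤ (ρ ^ 2 + 4 * ρ) * t₁ ^ 2 := by nlinarith [hkey, hd, hd0, ht₁']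
      have := hquad _ (by linarith) h2
      nlinarith [this]
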